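/- Let a₁, a₃ : J → ℝ be differentiable on an open interval J with a₁(b) < a₃(b) and f(a₁(b),b) = f(a₃(b),b) = 0 for all b ∈ J, where f(a,b) = (k0 + γ a²/(1+a²))·b − a with k0, γ > 0. Then the function I(b) := ∫_{a₁(b)}^{a₃(b)} f(ξ, b) dξ is differentiable on J with derivative I'(b) = ∫_{a₁(b)}^{a₃(b)} (k0 + γ ξ²/(1+ξ²)) dξ, which is strictly positive; hence I is strictly increasing on J. -/

import Mathlib

theorem stmt_4 (k0 γ : ℝ) (hk0 : 0 < k0) (hγ : 0 < γ)
    (f : ℝ → ℝ → ℝ)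
    (hf : ∀ a b, f a b = (k0 + γ * a ^ 2 / (1 + a ^ 2)) * b - a)
    (J : Set ℝ) (hJopen : IsOpen J) (hJconn : J.OrdConnected)
    (a₁ a₃ a₁' a₃' : ℝ → ℝ)
    (hd1 : ∀ b ∈ J, HasDerivAt a₁ (a₁' b) b)
    (hd3 : ∀ b ∈ J, HasDerivAt a₃ (a₃' b) b)
    (hlt : ∀ b ∈ J, a₁ b < a₃ b)
    (hr1 : ∀ b ∈ J, f (a₁ b) b = 0)
    (hr3 : ∀ b ∈ J, f (a₃ b) b = 0)
    (I : ℝ → ℝ)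
    (hI : ∀ b, I b = ∫ ξ in (a₁ b)..(a₃ b), f ξ b) :
    (∀ b ∈ J,
      HasDerivAt I (∫ ξ in (a₁ b)..(a₃ b), k0 + γ * ξ ^ 2 / (1 + ξ ^ 2)) b ∧
      0 < ∫ ξ in (a₁ b)..(a₃ b), k0 + γ * ξ ^ 2 / (1 + ξ ^ 2)) ∧
    StrictMonoOn I J := by
  set g : ℝ → ℝ := fun x => k0 + γ * x ^ 2 / (1 + x ^ 2) with hgdef
  have hgcont : Continuous g := by
    apply continuous_const.add
    exact (continuous_const.mul (continuous_pow 2)).div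
      (continuous_const.add (continuous_pow 2)) (fun x => by positivity)
  set G : ℝ → ℝ := fun x => k0 * x + γ * (x - Real.arctan x) with hGdef
  have hG : ∀ x, HasDerivAt G (g x) x := by
    intro x
    have h1 : HasDerivAt (fun x : ℝ => k0 * x) k0 x := by
      simpa using (hasDerivAt_id x).const_mul k0
    have h2 : HasDerivAt (fun x : ℝ => γ * (x - Real.arctan x))
        (γ * (1 - 1 / (1 + x ^ 2))) x :=
      ((hasDerivAt_id x).sub (Real.hasDerivAt_arctan x)).const_mul γ
    have h := h1.add h2
    convert h using 1
    case e'_4 | e'_5 | e'_8 => rfl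
    have hx : (1 : ℝ) + x ^ 2 ≠ 0 := by positivity
    simp only [hgdef]
    field_simp
    try ring
  have hintg : ∀ u v : ℝ, (∫ ξ in u..v, g ξ) = G v - G u := fun u v =>
    intervalIntegral.integral_eq_sub_of_hasDerivAt (fun x _ => hG x)
      (hgcont.intervalIntegrable u v)
  have hIeq : ∀ b, I b =
      (b * G (a₃ b) - (a₃ b) ^ 2 / 2) - (b * G (a₁ b) - (a₁ b) ^ 2 / 2) := by
    intro b
    rw [hI]
    have hF : ∀ x : ℝ, HasDerivAt (fun x => b * G x - x ^ 2 / 2) (f x b) x := by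
      intro x
      have h1 := (hG x).const_mul b
      have h2 : HasDerivAt (fun x : ℝ => x ^ 2 / 2) x x := by
        simpa using (hasDerivAt_pow 2 x).div_const 2
      have h := h1.sub h2
      convert h using 1
      case e'_4 | e'_5 | e'_8 => rfl
      rw [hf]; simp only [hgdef]; ring
    have hcont : Continuous (fun ξ => f ξ b) := by
      have he : (fun ξ => f ξ b) = fun ξ => b * g ξ - ξ := by
        funext ξ; rw [hf]; simp only [hgdef]; ring
      rw [he]; exact (continuous_const.mul hgcont).sub continuous_id
    rw [intervalIntegral.integral_eq_sub_of_hasDerivAt (fun x _ => hF x)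
      (hcont.intervalIntegrable _ _)]
  have hmain : ∀ b ∈ J, HasDerivAt I (∫ ξ in (a₁ b)..(a₃ b), g ξ) b := by
    intro b hb
    have hIfun : I = fun y =>
        (y * G (a₃ y) - (a₃ y) ^ 2 / 2) - (y * G (a₁ y) - (a₁ y) ^ 2 / 2) :=
      funext hIeq
    rw [hIfun, hintg]
    have h3 : HasDerivAt (fun y => y * G (a₃ y) - (a₃ y) ^ 2 / 2)
        (1 * G (a₃ b) + b * (g (a₃ b) * a₃' b) - (↑2 * a₃ b ^ 1 * a₃' b) / 2) b := by
      exact ((hasDerivAt_id b).mul ((hG (a₃ b)).comp b (hd3 b hb))).sub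
        (((hd3 b hb).pow 2).div_const 2)
    have h1 : HasDerivAt (fun y => y * G (a₁ y) - (a₁ y) ^ 2 / 2)
        (1 * G (a₁ b) + b * (g (a₁ b) * a₁' b) - (↑2 * a₁ b ^ 1 * a₁' b) / 2) b := by
      exact ((hasDerivAt_id b).mul ((hG (a₁ b)).comp b (hd1 b hb))).sub
        (((hd1 b hb).pow 2).div_const 2)
    have h := h3.sub h1
    convert h using 1
    case e'_4 | e'_5 | e'_8 => rfl
    have e3 : g (a₃ b) * b - a₃ b = 0 := by
      have := hr3 b hb; rw [hf] at this; simp only [hgdef]; linarith [this]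
    have e1 : g (a₁ b) * b - a₁ b = 0 := by
      have := hr1 b hb; rw [hf] at this; simp only [hgdef]; linarith [this]
    linear_combination (-(a₃' b)) * e3 + (a₁' b) * e1
  have hpos : ∀ b ∈ J, 0 < ∫ ξ in (a₁ b)..(a₃ b), g ξ := by
    intro b hb
    apply intervalIntegral.intervalIntegral_pos_of_pos_on
      (hgcont.intervalIntegrable _ _)
    · intro x _
      simp only [hgdef]
      have : 0 ≤ γ * x ^ 2 / (1 + x ^ 2) := by positivity
      linarith
    · exact hlt b hb
  refine ⟨fun b hb => ⟨hmain b hb, hpos b hb⟩, ?_⟩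
  have hconv : Convex ℝ J := (convex_iff_ordConnected).mpr hJconn
  apply strictMonoOn_of_deriv_pos hconv
  · exact fun x hx => (hmain x hx).continuousAt.continuousWithinAt
  · intro x hx
    rw [hJopen.interior_eq] at hx
    rw [(hmain x hx).deriv]
    exact hpos x hx
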